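/- arXiv:1703.02643 — 2 statements merged into one kernel-verified Lean document; each statement's English description precedes it below -/
import Mathlib

section
/- If P is a closed subset of Cantor space of positive measure and has the density property with respect to sequences (m_i), (ℓ_i), then P has the extension property with respect to (m_i), (ℓ_i). -/
open MeasureTheory

abbrev Cantor : Type := ℕ → Bool

/-- The first `n` bits of `X` as a binary string. -/
def pre (X : Cantor) (n : ℕ) : List Bool := (List.range n).map X

/-- The cylinder of all infinite extensions of the string `σ`. -/
def cyl (σ : List Bool) : Set Cantor := {X | pre X σ.length = σ}

/-- The open set generated by a set of strings. -/
def opn (S : Set (List Bool)) : Set Cantor := ⋃ σ ∈ S, cyl σ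

/-- `μ` is the uniform (Lebesgue) measure on Cantor space. -/
def UniformMeasure (μ : Measure Cantor) : Prop :=
  ∀ σ : List Bool, μ (cyl σ) = (2 : ENNReal)⁻¹ ^ σ.length

/-- A computably enumerable set of binary strings. -/
def CEStrings (A : Set (List Bool)) : Prop :=
  ∃ f : List Bool → ℕ → Bool, Computable₂ f ∧ A = {σ | ∃ s, f σ s = true}

/-- A `Π⁰₁` class: an effectively closed subset of Cantor space, i.e. the
complement of the open set generated by a c.e. set of strings. -/
def Pi01 (P : Set Cantor) : Prop := ∃ W, CEStrings W ∧ P = (opn W)ᶜ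

/-- Partial sums: `psum ℓ n = ∑_{i<n} ℓ i`. -/
def psum (ℓ : ℕ → ℕ) (n : ℕ) : ℕ := ∑ i ∈ Finset.range n, ℓ i

/-- `P` has the extension property w.r.t. `(m_i)`, `(ℓ_i)`: every `P`-extendible
string of length `L_i` has at least `2^{m_i}` `P`-extendible extensions of
length `L_{i+1}`. -/
def ExtensionProperty (P : Set Cantor) (m ℓ : ℕ → ℕ) : Prop :=
  ∀ i : ℕ, ∀ σ : List Bool, σ.length = psum ℓ i → (cyl σ ∩ P).Nonempty →
    ∃ S : Finset (List Bool), 2 ^ m i ≤ S.card ∧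
      ∀ τ ∈ S, τ.length = psum ℓ (i + 1) ∧ σ <+: τ ∧ (cyl τ ∩ P).Nonempty

/-- `P` has the density property w.r.t. `(m_i)`, `(ℓ_i)`: every `P`-extendible
string of length `L_n` has `P`-density at least `2^{m_n - ℓ_n}`. -/
def DensityProperty (μ : Measure Cantor) (P : Set Cantor) (m ℓ : ℕ → ℕ) : Prop :=
  ∀ n : ℕ, ∀ σ : List Bool, σ.length = psum ℓ n → (cyl σ ∩ P).Nonempty →
    (2 : ENNReal) ^ ((m n : ℝ) - (ℓ n : ℝ)) ≤ 2 ^ σ.length * μ (cyl σ ∩ P)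

lemma pre_length (X : Cantor) (n : ℕ) : (pre X n).length = n := by simp [pre]

lemma pre_take (X : Cantor) {a b : ℕ} (h : a ≤ b) : (pre X b).take a = pre X a := by
  simp [pre, ← List.map_take, List.take_range, h]

/-- If `P` is a closed subset of Cantor space of positive measure which has the
density property w.r.t. `(m_i)`, `(ℓ_i)`, then `P` has the extension property
w.r.t. `(m_i)`, `(ℓ_i)`. -/
theorem stmt5 (μ : Measure Cantor) (hμ : UniformMeasure μ)
    (P : Set Cantor) (hP : IsClosed P) (hpos : 0 < μ P) (m ℓ : ℕ → ℕ)
    (hdens : DensityProperty μ P m ℓ) : ExtensionProperty P m ℓ := by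
  intro i σ hlen hne
  set L := psum ℓ i with hL
  set N := psum ℓ (i + 1) with hN
  have hNL : N = L + ℓ i := by
    simp [hN, hL, psum, Finset.sum_range_succ]
  have hLN : L ≤ N := by omega
  have hfin : {τ : List Bool | τ.length = N ∧ σ <+: τ ∧ (cyl τ ∩ P).Nonempty}.Finite :=
    (List.finite_length_eq Bool N).subset (fun τ hτ => hτ.1)
  refine ⟨hfin.toFinset, ?_, ?_⟩
  swap
  · intro τ hτ
    rw [Set.Finite.mem_toFinset] at hτ
    exact hτ
  -- covering
  have hcover : cyl σ ∩ P ⊆ ⋃ τ ∈ hfin.toFinset, cyl τ := by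
    intro X hX
    have hmem : pre X N ∈ hfin.toFinset := ?_
    · exact Set.mem_biUnion hmem (by simp [cyl, pre_length])
    · rw [Set.Finite.mem_toFinset]
      refine ⟨pre_length X N, ?_, ⟨X, ?_, hX.2⟩⟩
      · refine ⟨(pre X N).drop L, ?_⟩
        have : σ = (pre X N).take L := by
          rw [pre_take X hLN]
          have h1 : pre X σ.length = σ := hX.1
          rw [hlen] at h1; exact h1.symm
        rw [this, List.take_append_drop]
      · simp [cyl, pre_length]
  have hmeas : μ (cyl σ ∩ P) ≤ hfin.toFinset.card * (2 : ENNReal)⁻¹ ^ N := by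
    calc μ (cyl σ ∩ P) ≤ μ (⋃ τ ∈ hfin.toFinset, cyl τ) := measure_mono hcover
      _ ≤ ∑ τ ∈ hfin.toFinset, μ (cyl τ) := measure_biUnion_finset_le _ _
      _ = ∑ τ ∈ hfin.toFinset, (2 : ENNReal)⁻¹ ^ N := by
          refine Finset.sum_congr rfl fun τ hτ => ?_
          rw [Set.Finite.mem_toFinset] at hτ
          rw [hμ τ, hτ.1]
      _ = hfin.toFinset.card * (2 : ENNReal)⁻¹ ^ N := by
          rw [Finset.sum_const, nsmul_eq_mul]
  have hd := hdens i σ hlen hne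
  rw [hlen] at hd
  set c : ℕ := hfin.toFinset.card
  have key : (2 : ENNReal) ^ ((m i : ℝ) - (ℓ i : ℝ)) ≤ c * (2 : ENNReal)⁻¹ ^ (ℓ i) := by
    calc (2 : ENNReal) ^ ((m i : ℝ) - (ℓ i : ℝ)) ≤ 2 ^ L * μ (cyl σ ∩ P) := hd
      _ ≤ 2 ^ L * (c * (2 : ENNReal)⁻¹ ^ N) := by
          exact mul_le_mul_right hmeas _
      _ = c * ((2 : ENNReal) ^ L * (2 : ENNReal)⁻¹ ^ L) * (2 : ENNReal)⁻¹ ^ (ℓ i) := by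
          rw [hNL, pow_add]; ring
      _ = c * (2 : ENNReal)⁻¹ ^ (ℓ i) := by
          rw [← mul_pow, ENNReal.mul_inv_cancel (by norm_num) (by norm_num), one_pow, mul_one]
  -- multiply by 2 ^ ℓ i
  have h2 : ((2 : ENNReal) ^ m i : ENNReal) ≤ (c : ENNReal) := by
    have := mul_le_mul_left key ((2 : ENNReal) ^ (ℓ i))
    have hrw : (2 : ENNReal) ^ ((m i : ℝ) - (ℓ i : ℝ)) * (2 : ENNReal) ^ (ℓ i)
        = (2 : ENNReal) ^ m i := by
      rw [← ENNReal.rpow_natCast 2 (ℓ i), ← ENNReal.rpow_add _ _ (by norm_num) (by norm_num),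
        sub_add_cancel, ENNReal.rpow_natCast]
    have hrw2 : (c : ENNReal) * (2 : ENNReal)⁻¹ ^ (ℓ i) * (2 : ENNReal) ^ (ℓ i)
        = (c : ENNReal) := by
      rw [mul_assoc, ← mul_pow, ENNReal.inv_mul_cancel (by norm_num) (by norm_num),
        one_pow, mul_one]
    rw [hrw, hrw2] at this
    exact this
  have : ((2 ^ m i : ℕ) : ENNReal) ≤ (c : ENNReal) := by push_cast; exact h2
  exact_mod_cast this
end

section
/- Let (m_i), (ℓ_i) be sequences of positive integers, M_n = Σ_{i<n} m_i, L_n = Σ_{i<n} ℓ_i, and let h_r be a nondecreasing function satisfying m_s + Σ_{i≤s}(ℓ_i − m_i) ≤ h_r(M_s) for all s. Then for every s and every n ∈ [M_s, M_{s+1}), we have L_{s+1} ≤ n + h_r(n). -/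
/-- If `h_r` is nondecreasing and `m_s + Σ_{i≤s}(ℓ_i − m_i) ≤ h_r(M_s)` for all `s`,
where `M_n = Σ_{i<n} m_i` and `L_n = Σ_{i<n} ℓ_i`, then for every `s` and every
`n ∈ [M_s, M_{s+1})` we have `L_{s+1} ≤ n + h_r(n)`. -/
theorem stmt15 (m ℓ : ℕ → ℕ) (hm : ∀ i, 1 ≤ m i) (hmℓ : ∀ i, m i ≤ ℓ i)
    (hr : ℕ → ℕ) (hrmono : Monotone hr)
    (h : ∀ s : ℕ, m s + ∑ i ∈ Finset.range (s + 1), (ℓ i - m i) ≤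
      hr (∑ i ∈ Finset.range s, m i)) :
    ∀ s n : ℕ, (∑ i ∈ Finset.range s, m i) ≤ n → n < (∑ i ∈ Finset.range (s + 1), m i) →
      (∑ i ∈ Finset.range (s + 1), ℓ i) ≤ n + hr n := by
  intro s n hn _
  have key : ∑ i ∈ Finset.range (s + 1), ℓ i =
      (∑ i ∈ Finset.range s, m i) + (m s + ∑ i ∈ Finset.range (s + 1), (ℓ i - m i)) := by
    have : ∀ i ∈ Finset.range (s + 1), ℓ i = m i + (ℓ i - m i) := fun i _ =>
      (Nat.add_sub_cancel' (hmℓ i)).symm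
    rw [Finset.sum_congr rfl this, Finset.sum_add_distrib, Finset.sum_range_succ m]
    ring
  rw [key]
  exact Nat.add_le_add hn ((h s).trans (hrmono (hn.trans (le_refl n))))
end
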